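/- The dilation function K is differentiable at every P ∈ S⁺, and its Fréchet derivative at P is the linear map Q ↦ tr(K_P(P)ᵀ·Q), where K_P(P) = 2·P·(PᵀP)⁻¹·S(PᵀP)/det(PᵀP)^{1/n}. Equivalently, the gradient of K at P with respect to the Frobenius inner product equals 2·P·(PᵀP)⁻¹·S(PᵀP)/det(PᵀP)^{1/n}. -/

import Mathlib

open Matrix

attribute [local instance] Matrix.frobeniusNormedAddCommGroup Matrix.frobeniusNormedSpace

/-- The dilation function `K(P) = |P|² / det(PᵀP)^(1/n)`, where `|P|² = tr(PᵀP)`. -/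
noncomputable def dil {N n : ℕ} (P : Matrix (Fin N) (Fin n) ℝ) : ℝ :=
  (Pᵀ * P).trace / (Pᵀ * P).det ^ ((1 : ℝ) / n)

/-- The Ahlfors operator `S(A) = (A + Aᵀ)/2 − (tr(A)/n)·I`. -/
noncomputable def ahl {n : ℕ} (A : Matrix (Fin n) (Fin n) ℝ) : Matrix (Fin n) (Fin n) ℝ :=
  (2⁻¹ : ℝ) • (A + Aᵀ) - (A.trace / (n : ℝ)) • 1

/-- The gradient `K_P(P) = 2·P·(PᵀP)⁻¹·S(PᵀP)/det(PᵀP)^(1/n)` of the dilation with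
respect to the Frobenius inner product. -/
noncomputable def dilGrad {N n : ℕ} (P : Matrix (Fin N) (Fin n) ℝ) : Matrix (Fin N) (Fin n) ℝ :=
  (2 / (Pᵀ * P).det ^ ((1 : ℝ) / n)) • (P * (Pᵀ * P)⁻¹ * ahl (Pᵀ * P))


noncomputable def detCMM (n : ℕ) :
    ContinuousMultilinearMap ℝ (fun _ : Fin n => (Fin n → ℝ)) ℝ :=
  MultilinearMap.mkContinuous
    (Matrix.detRowAlternating : ((Fin n) → ℝ) [⋀^(Fin n)]→ₗ[ℝ] ℝ).toMultilinearMap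
    (n.factorial) (by
      intro m
      have h1 : (Matrix.detRowAlternating : ((Fin n) → ℝ) [⋀^(Fin n)]→ₗ[ℝ] ℝ).toMultilinearMap m
          = Matrix.det (Matrix.of m) := rfl
      rw [h1, Matrix.det_apply]
      calc ‖∑ σ : Equiv.Perm (Fin n), Equiv.Perm.sign σ • ∏ i, Matrix.of m (σ i) i‖
          ≤ ∑ σ : Equiv.Perm (Fin n), ‖Equiv.Perm.sign σ • ∏ i, Matrix.of m (σ i) i‖ :=
            norm_sum_le _ _
        _ ≤ ∑ _σ : Equiv.Perm (Fin n), ∏ i, ‖m i‖ := by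
            refine Finset.sum_le_sum fun σ _ => ?_
            have h2 : ‖Equiv.Perm.sign σ • ∏ i, Matrix.of m (σ i) i‖
                = ‖∏ i, m (σ i) i‖ := by
              rcases Int.units_eq_one_or (Equiv.Perm.sign σ) with h | h <;>
                simp [h, Units.smul_def, Matrix.of_apply]
            rw [h2]
            calc ‖∏ i, m (σ i) i‖ ≤ ∏ i, ‖m (σ i) i‖ := by
                  simp [Real.norm_eq_abs, Finset.abs_prod]
              _ ≤ ∏ i, ‖m (σ i)‖ := by
                  refine Finset.prod_le_prod (fun i _ => norm_nonneg _) fun i _ =>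
                    norm_le_pi_norm (m (σ i)) i
              _ = ∏ i, ‖m i‖ := Equiv.prod_comp σ fun i => ‖m i‖
        _ = (n.factorial : ℝ) * ∏ i, ‖m i‖ := by
            rw [Finset.sum_const, Finset.card_univ, Fintype.card_perm]
            simp [nsmul_eq_mul]
      )

noncomputable def detDerivCLM {n : ℕ} (A : Matrix (Fin n) (Fin n) ℝ) :
    Matrix (Fin n) (Fin n) ℝ →L[ℝ] ℝ :=
  LinearMap.toContinuousLinearMap
    { toFun := fun Q => (A.adjugate * Q).trace
      map_add' := fun Q R => by simp [Matrix.mul_add]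
      map_smul' := fun c Q => by simp [Matrix.mul_smul] }

noncomputable def matPiCLM (n : ℕ) :
    Matrix (Fin n) (Fin n) ℝ →L[ℝ] ((Fin n) → (Fin n) → ℝ) :=
  LinearMap.toContinuousLinearMap
    { toFun := fun M i => M i
      map_add' := fun _ _ => rfl
      map_smul' := fun _ _ => rfl }

theorem sum_det_updateRow {n : ℕ} (A Q : Matrix (Fin n) (Fin n) ℝ) :
    ∑ i, (A.updateRow i (Q i)).det = (A.adjugate * Q).trace := by
  have h : ∀ i, (A.updateRow i (Q i)).det = ∑ j, A.adjugate j i * Q i j := by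
    intro i
    rw [← Matrix.det_transpose, ← Matrix.updateCol_transpose, ← Matrix.cramer_apply,
      Matrix.cramer_eq_adjugate_mulVec, ← Matrix.adjugate_transpose]
    simp [Matrix.mulVec, dotProduct, Matrix.transpose_apply]
  simp_rw [h, Matrix.trace, Matrix.diag, Matrix.mul_apply]
  exact Finset.sum_comm

theorem det_hasFDerivAt {n : ℕ} (A : Matrix (Fin n) (Fin n) ℝ) :
    HasFDerivAt Matrix.det (detDerivCLM A) A := by
  have h := ((detCMM n).hasFDerivAt (x := fun i => A i)).comp A (matPiCLM n).hasFDerivAt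
  have hfun : (⇑(detCMM n)) ∘ (⇑(matPiCLM n)) = (Matrix.det : Matrix (Fin n) (Fin n) ℝ → ℝ) := by
    funext M
    rfl
  have hclm : ((detCMM n).linearDeriv (fun i => A i)).comp (matPiCLM n) = detDerivCLM A := by
    ext Q
    have h1 : (((detCMM n).linearDeriv (fun i => A i)).comp (matPiCLM n)) Q
        = ∑ i, (detCMM n) (Function.update (fun i => A i) i (Q i)) := by
      simp [ContinuousMultilinearMap.linearDeriv_apply, matPiCLM]
      rfl
    rw [h1]
    have h2 : (detDerivCLM A) Q = (A.adjugate * Q).trace := rfl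
    rw [h2, ← sum_det_updateRow A Q]
    refine Finset.sum_congr rfl fun i _ => ?_
    rfl
  rw [hfun] at h
  exact h.congr_fderiv hclm

theorem isBoundedBilinearMap_matMul {l m k : ℕ} :
    IsBoundedBilinearMap ℝ
      (fun p : Matrix (Fin l) (Fin m) ℝ × Matrix (Fin m) (Fin k) ℝ => p.1 * p.2) where
  add_left := fun x₁ x₂ y => Matrix.add_mul x₁ x₂ y
  smul_left := fun c x y => Matrix.smul_mul c x y
  add_right := fun x y₁ y₂ => Matrix.mul_add x y₁ y₂
  smul_right := fun c x y => Matrix.mul_smul x c y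
  bound := ⟨1, one_pos, fun x y => by
    simpa using Matrix.frobenius_norm_mul x y⟩

noncomputable def transposeCLM (N n : ℕ) :
    Matrix (Fin N) (Fin n) ℝ →L[ℝ] Matrix (Fin n) (Fin N) ℝ :=
  LinearMap.toContinuousLinearMap
    { toFun := fun M => Mᵀ
      map_add' := fun _ _ => Matrix.transpose_add _ _
      map_smul' := fun _ _ => Matrix.transpose_smul _ _ }

noncomputable def traceCLM (n : ℕ) : Matrix (Fin n) (Fin n) ℝ →L[ℝ] ℝ :=
  LinearMap.toContinuousLinearMap (Matrix.traceLinearMap (Fin n) ℝ ℝ)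

set_option maxHeartbeats 1000000 in
/-- the dilation `K` is (Fréchet) differentiable at every `P ∈ S⁺`, with
derivative the linear map `Q ↦ tr(K_P(P)ᵀ·Q)`; i.e. the gradient of `K` at `P` with respect
to the Frobenius inner product is `K_P(P) = 2·P·(PᵀP)⁻¹·S(PᵀP)/det(PᵀP)^(1/n)`. -/
theorem dil_hasFDerivAt (n N : ℕ) (hn : 1 ≤ n) (hnN : n ≤ N)
    (P : Matrix (Fin N) (Fin n) ℝ) (hP : 0 < (Pᵀ * P).det) :
    ∃ L : Matrix (Fin N) (Fin n) ℝ →L[ℝ] ℝ,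
      HasFDerivAt dil L P ∧ ∀ Q : Matrix (Fin N) (Fin n) ℝ, L Q = ((dilGrad P)ᵀ * Q).trace := by
  set A : Matrix (Fin n) (Fin n) ℝ := Pᵀ * P with hA
  have hAsymm : Aᵀ = A := by rw [hA, Matrix.transpose_mul, Matrix.transpose_transpose]
  set g : ℝ := A.det with hg
  set t : ℝ := A.trace with ht
  set d : ℝ := g ^ ((1 : ℝ) / n) with hd
  have hg0 : g ≠ 0 := ne_of_gt hP
  have hd0 : d ≠ 0 := ne_of_gt (Real.rpow_pos_of_pos hP _)
  have hnn : (n : ℝ) ≠ 0 := Nat.cast_ne_zero.mpr (by omega)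
  have hu : IsUnit A.det := (isUnit_iff_ne_zero).mpr hg0
  -- derivative of P ↦ Pᵀ * P
  have hprod : HasFDerivAt (fun P : Matrix (Fin N) (Fin n) ℝ => (Pᵀ, P))
      ((transposeCLM N n).prod (ContinuousLinearMap.id ℝ _)) P :=
    HasFDerivAt.prodMk (transposeCLM N n).hasFDerivAt (hasFDerivAt_id P)
  have hAder : HasFDerivAt (fun P : Matrix (Fin N) (Fin n) ℝ => Pᵀ * P)
      (((isBoundedBilinearMap_matMul).deriv (Pᵀ, P)).comp
        ((transposeCLM N n).prod (ContinuousLinearMap.id ℝ _))) P :=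
    HasFDerivAt.comp (𝕜 := ℝ) (f := fun P : Matrix (Fin N) (Fin n) ℝ => (Pᵀ, P))
      (g := fun p : Matrix (Fin n) (Fin N) ℝ × Matrix (Fin N) (Fin n) ℝ => p.1 * p.2) P
      ((isBoundedBilinearMap_matMul).hasFDerivAt (Pᵀ, P)) hprod
  set Φ := (((isBoundedBilinearMap_matMul (l := n) (m := N) (k := n)).deriv (Pᵀ, P)).comp
        ((transposeCLM N n).prod (ContinuousLinearMap.id ℝ _))) with hΦ
  have hΦapp : ∀ Q, Φ Q = Pᵀ * Q + Qᵀ * P := by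
    intro Q
    simp [hΦ, transposeCLM, IsBoundedBilinearMap.deriv_apply]
    rfl
  -- derivatives of trace and det composed
  have hf : HasFDerivAt (fun P : Matrix (Fin N) (Fin n) ℝ => (Pᵀ * P).trace)
      ((traceCLM n).comp Φ) P := (traceCLM n).hasFDerivAt.comp P hAder
  have hgder : HasFDerivAt (fun P : Matrix (Fin N) (Fin n) ℝ => (Pᵀ * P).det)
      ((detDerivCLM A).comp Φ) P := (det_hasFDerivAt A).comp P hAder
  -- derivative of x ↦ x ^ (1/n) at g
  have hrpow : HasDerivAt (fun x : ℝ => x ^ ((1 : ℝ) / n))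
      (((1 : ℝ) / n) * g ^ ((1 : ℝ) / n - 1)) g :=
    Real.hasDerivAt_rpow_const (Or.inl hg0)
  have hh : HasFDerivAt (fun P : Matrix (Fin N) (Fin n) ℝ => (Pᵀ * P).det ^ ((1 : ℝ) / n))
      ((((1 : ℝ) / n) * g ^ ((1 : ℝ) / n - 1)) • ((detDerivCLM A).comp Φ)) P :=
    by have := hrpow.comp_hasFDerivAt P hgder; exact this
  have hinv : HasFDerivAt
      (fun P : Matrix (Fin N) (Fin n) ℝ => ((Pᵀ * P).det ^ ((1 : ℝ) / n))⁻¹)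
      ((-(d ^ 2)⁻¹) • ((((1 : ℝ) / n) * g ^ ((1 : ℝ) / n - 1)) • ((detDerivCLM A).comp Φ))) P :=
    (hasDerivAt_inv hd0).comp_hasFDerivAt P hh
  have hmul := hf.mul hinv
  set L := (fun P : Matrix (Fin N) (Fin n) ℝ => (Pᵀ * P).trace) P •
      ((-(d ^ 2)⁻¹) • ((((1 : ℝ) / n) * g ^ ((1 : ℝ) / n - 1)) • ((detDerivCLM A).comp Φ))) +
      (fun P : Matrix (Fin N) (Fin n) ℝ => ((Pᵀ * P).det ^ ((1 : ℝ) / n))⁻¹) P •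
      ((traceCLM n).comp Φ) with hL
  have hdil : HasFDerivAt dil L P := by
    have e : dil = fun P : Matrix (Fin N) (Fin n) ℝ =>
        (Pᵀ * P).trace * ((Pᵀ * P).det ^ ((1 : ℝ) / n))⁻¹ := by
      funext R
      simp [dil, div_eq_mul_inv]
    rw [e]
    exact hmul
  refine ⟨L, hdil, fun Q => ?_⟩
  -- compute both sides
  have hAinvT : A⁻¹ᵀ = A⁻¹ := by rw [Matrix.transpose_nonsing_inv, hAsymm]
  have hadj : A.adjugate = g • A⁻¹ := by
    calc A.adjugate = (A⁻¹ * A) * A.adjugate := by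
          rw [Matrix.nonsing_inv_mul A hu, Matrix.one_mul]
      _ = A⁻¹ * (A.det • (1 : Matrix (Fin n) (Fin n) ℝ)) := by
          rw [Matrix.mul_assoc, Matrix.mul_adjugate]
      _ = g • A⁻¹ := by rw [Matrix.mul_smul, Matrix.mul_one]
  -- traces
  have htr1 : (Qᵀ * P).trace = (Pᵀ * Q).trace := by
    rw [← Matrix.trace_transpose (Qᵀ * P), Matrix.transpose_mul, Matrix.transpose_transpose]
  have htr2 : (A.adjugate * (Qᵀ * P)).trace = g * (A⁻¹ * (Pᵀ * Q)).trace := by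
    rw [Matrix.trace_mul_comm, ← Matrix.trace_transpose (Qᵀ * P * A.adjugate),
      Matrix.transpose_mul, Matrix.transpose_mul, Matrix.transpose_transpose,
      Matrix.adjugate_transpose, hAsymm, hadj, Matrix.smul_mul, Matrix.trace_smul,
      smul_eq_mul]
  have htr3 : (A.adjugate * (Pᵀ * Q)).trace = g * (A⁻¹ * (Pᵀ * Q)).trace := by
    rw [hadj, Matrix.smul_mul, Matrix.trace_smul, smul_eq_mul]
  -- LHS value
  have hLQ : L Q = t * (-(d ^ 2)⁻¹) * (((1 : ℝ) / n) * g ^ ((1 : ℝ) / n - 1)) *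
      (2 * (g * (A⁻¹ * (Pᵀ * Q)).trace)) + d⁻¹ * (2 * (Pᵀ * Q).trace) := by
    have h1 : ((detDerivCLM A).comp Φ) Q = 2 * (g * (A⁻¹ * (Pᵀ * Q)).trace) := by
      have h0 : (detDerivCLM A) (Φ Q) = (A.adjugate * (Φ Q)).trace := rfl
      rw [show ((detDerivCLM A).comp Φ) Q = (detDerivCLM A) (Φ Q) from rfl, h0, hΦapp, Matrix.mul_add, Matrix.trace_add,
        htr2, htr3]
      ring
    have h2 : ((traceCLM n).comp Φ) Q = 2 * (Pᵀ * Q).trace := by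
      have h0 : (traceCLM n) (Φ Q) = (Φ Q).trace := rfl
      rw [show ((traceCLM n).comp Φ) Q = (traceCLM n) (Φ Q) from rfl, h0, hΦapp, Matrix.trace_add, htr1]
      ring
    rw [hL]
    simp only [ContinuousLinearMap.add_apply, ContinuousLinearMap.smul_apply, smul_eq_mul,
      h1, h2]
    ring
  -- RHS value
  have hahl : ahl A = A - (t / n) • 1 := by
    rw [ahl, hAsymm, ← two_smul ℝ A, smul_smul]
    norm_num
    rfl
  have hPAS : P * A⁻¹ * ahl A = P - (t / n) • (P * A⁻¹) := by
    rw [hahl, Matrix.mul_sub, Matrix.mul_assoc, Matrix.nonsing_inv_mul A hu, Matrix.mul_one,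
      Matrix.mul_smul, Matrix.mul_one]
  have hRHS : ((dilGrad P)ᵀ * Q).trace =
      (2 / d) * ((Pᵀ * Q).trace - (t / n) * (A⁻¹ * (Pᵀ * Q)).trace) := by
    rw [dilGrad]
    rw [show (Pᵀ * P) = A from rfl]
    rw [hPAS, Matrix.transpose_smul, Matrix.smul_mul, Matrix.trace_smul,
      Matrix.transpose_sub, Matrix.transpose_smul, Matrix.transpose_mul, hAinvT,
      Matrix.sub_mul, Matrix.trace_sub, Matrix.smul_mul, Matrix.trace_smul,
      Matrix.mul_assoc]
    simp only [smul_eq_mul]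
    rfl
  rw [hLQ, hRHS]
  -- real arithmetic
  have hkey : g ^ ((1 : ℝ) / n - 1) * g = d := by
    rw [hd]
    nth_rewrite 2 [← Real.rpow_one g]
    rw [← Real.rpow_add hP]
    norm_num
  have hgd : g ^ ((1 : ℝ) / n - 1) = d / g := by
    rw [eq_div_iff hg0]; exact hkey
  rw [hgd]
  field_simp
  ring
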